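/- arXiv:0704.1966 — 2 statements merged into one kernel-verified Lean document; each statement's English description precedes it below -/
import Mathlib

section
/- For n ≥ 2, 1 ≤ d ≤ n, define G : Ω_n → Ω_n as the block-diagonal matrix function G(X) = diag(M_d(X), (tr(X)/n)·I_{n−d}), where M_d(X) is the d×d companion-type matrix with ones on the subdiagonal, tr(X)/n in the top-right corner, and zeros elsewhere (and M_1(X) = [tr(X)/n]). Then: (i) G maps Ω_n into Ω_n; (ii) r(G(X)) = |tr(X)/n|^{1/d} for all X ∈ Ω_n; (iii) G(0) is nilpotent and the degree of the minimal polynomial of G(0) equals d. -/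
open Complex Polynomial

/-- The spectral radius of an n×n complex matrix. -/
noncomputable def specRad {n : ℕ} (A : Matrix (Fin n) (Fin n) ℂ) : ℝ :=
  sSup ((fun z : ℂ => ‖z‖) '' spectrum ℂ A)

/-- The block-diagonal map G(X) = diag(M_d(X), (tr X / n)·I_{n−d}), where M_d(X) is the
d×d companion-type block with ones on the subdiagonal, tr(X)/n in the top-right corner
and zeros elsewhere (M_1(X) = [tr X / n]). -/
noncomputable def Gmap (n d : ℕ) (X : Matrix (Fin n) (Fin n) ℂ) :
    Matrix (Fin n) (Fin n) ℂ :=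
  fun i j =>
    if (i : ℕ) < d ∧ (j : ℕ) < d then
      (if (i : ℕ) = 0 ∧ (j : ℕ) = d - 1 then X.trace / n else 0) +
        (if (i : ℕ) = (j : ℕ) + 1 then 1 else 0)
    else if (i : ℕ) = (j : ℕ) ∧ d ≤ (i : ℕ) then X.trace / n else 0

section Aux

variable {n d : ℕ}

/-- Eigenvector characterization of the spectrum of a complex matrix. -/
lemma mem_spectrum_iff_eig {m : ℕ} (A : Matrix (Fin m) (Fin m) ℂ) (μ : ℂ) :
    μ ∈ spectrum ℂ A ↔ ∃ v, v ≠ 0 ∧ A.mulVec v = μ • v := by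
  rw [spectrum.mem_iff, Matrix.isUnit_iff_isUnit_det, isUnit_iff_ne_zero, not_ne_iff,
    ← Matrix.exists_mulVec_eq_zero_iff]
  have halg : (algebraMap ℂ (Matrix (Fin m) (Fin m) ℂ)) μ = μ • 1 :=
    Algebra.algebraMap_eq_smul_one μ
  constructor
  · rintro ⟨v, hv, h⟩
    refine ⟨v, hv, ?_⟩
    rw [halg, Matrix.sub_mulVec, Matrix.smul_mulVec, Matrix.one_mulVec,
      sub_eq_zero] at h
    exact h.symm
  · rintro ⟨v, hv, h⟩
    refine ⟨v, hv, ?_⟩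
    rw [halg, Matrix.sub_mulVec, Matrix.smul_mulVec, Matrix.one_mulVec, sub_eq_zero, h]

lemma eval_charpoly' {m : ℕ} (A : Matrix (Fin m) (Fin m) ℂ) (z : ℂ) :
    A.charpoly.eval z = (z • (1 : Matrix (Fin m) (Fin m) ℂ) - A).det := by
  rw [Matrix.charpoly, ← Polynomial.coe_evalRingHom, RingHom.map_det]
  congr 1
  ext i j
  by_cases h : i = j
  · subst h; simp [Matrix.charmatrix_apply, Matrix.one_apply, Matrix.diagonal_apply]
  · simp [Matrix.charmatrix_apply, Matrix.one_apply_ne h, Matrix.diagonal_apply_ne _ h, h]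

lemma mem_spectrum_of_root {m : ℕ} (A : Matrix (Fin m) (Fin m) ℂ) (μ : ℂ)
    (h : A.charpoly.IsRoot μ) : μ ∈ spectrum ℂ A := by
  rw [spectrum.mem_iff, Matrix.isUnit_iff_isUnit_det, isUnit_iff_ne_zero, not_ne_iff,
    Algebra.algebraMap_eq_smul_one]
  rw [Polynomial.IsRoot, eval_charpoly'] at h
  exact h

lemma abs_multiset_sum_le (s : Multiset ℂ) :
    ‖s.sum‖ ≤ (s.map (fun z : ℂ => ‖z‖)).sum := by
  induction s using Multiset.induction with
  | empty => simp
  | cons a s ih =>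
      simp only [Multiset.sum_cons, Multiset.map_cons]
      exact (norm_add_le _ _).trans (by linarith)

/-- The modulus of the normalized trace is at most the spectral radius. -/
lemma abs_trace_div_le (hn : 0 < n) (X : Matrix (Fin n) (Fin n) ℂ) :
    ‖X.trace / (n : ℂ)‖ ≤ specRad X := by
  have hbdd : BddAbove ((fun z : ℂ => ‖z‖) '' spectrum ℂ X) :=
    (X.finite_spectrum.image _).bddAbove
  have hspec : ∀ μ ∈ X.charpoly.roots, ‖μ‖ ≤ specRad X := by
    intro μ hμ
    exact le_csSup hbdd ⟨μ, mem_spectrum_of_root X μ (Polynomial.isRoot_of_mem_roots hμ), rfl⟩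
  have htr : X.trace = X.charpoly.roots.sum := Matrix.trace_eq_sum_roots_charpoly X
  have hcard : Multiset.card X.charpoly.roots = n := by
    rw [(Polynomial.splits_iff_card_roots).mp (IsAlgClosed.splits X.charpoly),
      X.charpoly_natDegree_eq_dim, Fintype.card_fin]
  have h1 : ‖X.trace‖ ≤ n * specRad X := by
    calc ‖X.trace‖ ≤ (X.charpoly.roots.map (fun z : ℂ => ‖z‖)).sum := by
          rw [htr]; exact abs_multiset_sum_le _
      _ ≤ (Multiset.card (X.charpoly.roots.map (fun z : ℂ => ‖z‖))) • specRad X := by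
          refine Multiset.sum_le_card_nsmul _ _ ?_
          intro x hx
          obtain ⟨μ, hμ, rfl⟩ := Multiset.mem_map.mp hx
          exact hspec μ hμ
      _ = n * specRad X := by rw [Multiset.card_map, hcard, nsmul_eq_mul]
  rw [norm_div, Complex.norm_natCast, div_le_iff₀ (by positivity)]
  linarith [h1]

variable (X : Matrix (Fin n) (Fin n) ℂ)

lemma Gmap_mulVec_zero (hd1 : 1 ≤ d) (hdn : d ≤ n) (v : Fin n → ℂ) (i : Fin n)
    (hi : (i : ℕ) = 0) :
    (Gmap n d X).mulVec v i = (X.trace / n) * v ⟨d - 1, by omega⟩ := by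
  rw [Matrix.mulVec, dotProduct]
  rw [Finset.sum_eq_single (⟨d - 1, by omega⟩ : Fin n)]
  · simp only [Gmap, hi]
    have : (0 < d ∧ d - 1 < d) := by omega
    rw [if_pos (by simpa using this)]
    simp
  · intro j _ hj
    have hj' : (j : ℕ) ≠ d - 1 := fun h => hj (Fin.ext (by simp [h]))
    simp only [Gmap, hi]
    split_ifs with h1 h2 h3 <;> simp_all <;> omega
  · intro h; exact absurd (Finset.mem_univ _) h

lemma Gmap_mulVec_mid (hdn : d ≤ n) (v : Fin n → ℂ) (i : Fin n)
    (hi0 : 0 < (i : ℕ)) (hid : (i : ℕ) < d) :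
    (Gmap n d X).mulVec v i = v ⟨(i : ℕ) - 1, by omega⟩ := by
  rw [Matrix.mulVec, dotProduct]
  rw [Finset.sum_eq_single (⟨(i : ℕ) - 1, by omega⟩ : Fin n)]
  · simp only [Gmap]
    rw [if_pos (⟨hid, show (i : ℕ) - 1 < d by omega⟩ : (i:ℕ) < d ∧ (i:ℕ) - 1 < d)]
    rw [if_neg (fun h => by omega : ¬((i:ℕ) = 0 ∧ (i:ℕ) - 1 = d - 1)),
      if_pos (show (i : ℕ) = (i : ℕ) - 1 + 1 by omega)]
    simp
  · intro j _ hj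
    have hj' : (j : ℕ) ≠ (i : ℕ) - 1 := fun h => hj (Fin.ext (by simp [h]))
    simp only [Gmap]
    split_ifs with h1 h2 h3 <;> simp_all <;> omega
  · intro h; exact absurd (Finset.mem_univ _) h

lemma Gmap_mulVec_hi (v : Fin n → ℂ) (i : Fin n) (hi : d ≤ (i : ℕ)) :
    (Gmap n d X).mulVec v i = (X.trace / n) * v i := by
  rw [Matrix.mulVec, dotProduct]
  rw [Finset.sum_eq_single i]
  · simp only [Gmap]
    rw [if_neg (by omega)]; simp [hi]
  · intro j _ hj
    have hj' : (j : ℕ) ≠ (i : ℕ) := fun h => hj (Fin.ext h)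
    simp only [Gmap]
    split_ifs with h1 h2 h3 <;> simp_all <;> omega
  · intro h; exact absurd (Finset.mem_univ _) h

lemma Gmap_spectrum_sub (hd1 : 1 ≤ d) (hdn : d ≤ n) (lam : ℂ)
    (h : lam ^ d = X.trace / n) : lam ∈ spectrum ℂ (Gmap n d X) := by
  rw [mem_spectrum_iff_eig]
  refine ⟨fun i => if (i : ℕ) < d then lam ^ (d - 1 - (i : ℕ)) else 0, ?_, ?_⟩
  · intro hv
    have := congrFun hv ⟨d - 1, by omega⟩
    simp only [Fin.val_mk] at this
    rw [if_pos (by omega)] at this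
    simp at this
  · funext i
    rcases lt_or_ge (i : ℕ) d with hid | hid
    · rcases Nat.eq_zero_or_pos (i : ℕ) with hi0 | hi0
      · rw [Gmap_mulVec_zero X hd1 hdn _ i hi0]
        simp only [Pi.smul_apply, Fin.val_mk, smul_eq_mul]
        rw [if_pos (by omega), if_pos (by omega), hi0]
        have h1 : d - 1 - (d - 1) = 0 := by omega
        have h2 : lam * lam ^ (d - 1 - 0) = lam ^ d := by
          rw [← pow_succ']
          congr 1
          omega
        rw [h1, h2, h, pow_zero, mul_one]
      · rw [Gmap_mulVec_mid X hdn _ i hi0 hid]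
        simp only [Pi.smul_apply, Fin.val_mk, smul_eq_mul]
        rw [if_pos (by omega), if_pos hid]
        rw [← pow_succ']
        congr 1
        omega
    · rw [Gmap_mulVec_hi X _ i hid]
      simp only [Pi.smul_apply, smul_eq_mul]
      rw [if_neg (by omega)]
      ring

lemma Gmap_spectrum_sup (hd1 : 1 ≤ d) (hdn : d ≤ n) (lam : ℂ)
    (h : lam ∈ spectrum ℂ (Gmap n d X)) :
    lam ^ d = X.trace / n ∨ lam = X.trace / n := by
  rw [mem_spectrum_iff_eig] at h
  obtain ⟨v, hv, hGv⟩ := h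
  by_cases hup : ∃ i : Fin n, d ≤ (i : ℕ) ∧ v i ≠ 0
  · obtain ⟨i, hi, hvi⟩ := hup
    right
    have := congrFun hGv i
    rw [Gmap_mulVec_hi X _ i hi] at this
    simp only [Pi.smul_apply, smul_eq_mul] at this
    exact (mul_right_cancel₀ hvi this).symm
  · push_neg at hup
    left
    have key : ∀ m : ℕ, ∀ i : Fin n, (i : ℕ) + m = d - 1 →
        v i = lam ^ m * v ⟨d - 1, by omega⟩ := by
      intro m
      induction m with
      | zero =>
          intro i hi
          have : i = ⟨d - 1, by omega⟩ := Fin.ext (by simpa using hi)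
          rw [this, pow_zero, one_mul]
      | succ m ih =>
          intro i hi
          have hi1 : (i : ℕ) + 1 < d := by omega
          set j : Fin n := ⟨(i : ℕ) + 1, by omega⟩ with hj
          have hGvj := congrFun hGv j
          rw [Gmap_mulVec_mid X hdn _ j (by simp [hj]) (by simpa [hj] using hi1)] at hGvj
          simp only [Pi.smul_apply, smul_eq_mul, hj, Fin.val_mk, Nat.add_sub_cancel] at hGvj
          have hii : (⟨(i : ℕ), by omega⟩ : Fin n) = i := Fin.ext rfl
          rw [hii] at hGvj
          have ihj := ih j (by simp [hj]; omega)
          rw [hGvj, ihj, ← mul_assoc, ← pow_succ']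
    have hvd : v ⟨d - 1, by omega⟩ ≠ 0 := by
      intro h0
      apply hv
      funext i
      simp only [Pi.zero_apply]
      rcases lt_or_ge (i : ℕ) d with hid | hid
      · have := key (d - 1 - (i : ℕ)) i (by omega)
        rw [this, h0, mul_zero]
      · exact hup i hid
    have h0 := congrFun hGv ⟨0, by omega⟩
    rw [Gmap_mulVec_zero X hd1 hdn _ _ (by simp)] at h0
    simp only [Pi.smul_apply, smul_eq_mul] at h0
    have hv0 := key (d - 1) ⟨0, by omega⟩ (by simp)
    rw [hv0, ← mul_assoc, ← pow_succ'] at h0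
    have hd' : d - 1 + 1 = d := by omega
    rw [hd'] at h0
    exact (mul_right_cancel₀ hvd h0).symm

lemma specRad_Gmap_aux (hd1 : 1 ≤ d)
    (G : Matrix (Fin n) (Fin n) ℂ) (c : ℂ)
    (hsub : ∀ lam : ℂ, lam ^ d = c → lam ∈ spectrum ℂ G)
    (hsup : ∀ lam ∈ spectrum ℂ G, lam ^ d = c ∨ lam = c)
    (hc : ‖c‖ ≤ 1) :
    specRad G = ‖c‖ ^ ((1 : ℝ) / d) := by
  have hd0 : (d : ℕ) ≠ 0 := by omega
  obtain ⟨lam, hlam⟩ := IsAlgClosed.exists_pow_nat_eq c (show 0 < d by omega)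
  have hroot : ∀ μ : ℂ, μ ^ d = c → ‖μ‖ = ‖c‖ ^ ((1 : ℝ) / d) := by
    intro μ hμ
    have h1 : ‖μ‖ ^ d = ‖c‖ := by rw [← norm_pow, hμ]
    rw [← h1, one_div, Real.pow_rpow_inv_natCast (norm_nonneg μ) hd0]
  have hgreat : IsGreatest ((fun z : ℂ => ‖z‖) '' spectrum ℂ G)
      (‖c‖ ^ ((1 : ℝ) / d)) := by
    constructor
    · exact ⟨lam, hsub lam hlam, hroot lam hlam⟩
    · rintro y ⟨μ, hμ, rfl⟩
      rcases hsup μ hμ with h' | h'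
      · exact le_of_eq (hroot μ h')
      · rw [h']
        show ‖c‖ ≤ ‖c‖ ^ ((1 : ℝ) / d)
        rcases eq_or_lt_of_le (norm_nonneg c) with h0 | h0
        · rw [← h0]
          positivity
        · calc ‖c‖ = ‖c‖ ^ (1 : ℝ) := (Real.rpow_one _).symm
            _ ≤ ‖c‖ ^ ((1 : ℝ) / d) := by
                apply Real.rpow_le_rpow_of_exponent_ge h0 hc
                rw [div_le_one (by positivity)]
                exact_mod_cast Nat.one_le_cast.mpr hd1
  exact hgreat.csSup_eq

lemma Gmap_zero_entry (i j : Fin n) :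
    Gmap n d 0 i j = if (i:ℕ) = (j:ℕ) + 1 ∧ (i:ℕ) < d then 1 else 0 := by
  simp only [Gmap, Matrix.trace_zero, zero_div]
  split_ifs <;> simp_all <;> omega

lemma Gmap_zero_pow (k : ℕ) (i j : Fin n) :
    ((Gmap n d 0) ^ (k + 1)) i j = if (i:ℕ) = (j:ℕ) + (k+1) ∧ (i:ℕ) < d then 1 else 0 := by
  induction k generalizing i j with
  | zero => simpa using Gmap_zero_entry i j
  | succ k ih =>
    rw [pow_succ', Matrix.mul_apply]
    rcases Nat.eq_zero_or_pos (i:ℕ) with hi0 | hi0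
    · rw [Finset.sum_eq_zero, if_neg (by omega)]
      intro l _
      rw [Gmap_zero_entry, if_neg (by omega), zero_mul]
    · obtain ⟨l0, hl0v⟩ : ∃ l0 : Fin n, (l0 : ℕ) = (i:ℕ) - 1 :=
        ⟨⟨(i:ℕ) - 1, by omega⟩, rfl⟩
      rw [Finset.sum_eq_single l0]
      · rw [Gmap_zero_entry, ih]
        split_ifs <;> first | (exfalso; omega) | norm_num
      · intro l _ hl
        have hl' : (l : ℕ) ≠ (l0:ℕ) := fun h => hl (Fin.ext h)
        rw [Gmap_zero_entry, if_neg (by omega), zero_mul]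
      · intro h; exact absurd (Finset.mem_univ _) h

lemma Gmap_zero_pow_d (hd1 : 1 ≤ d) : (Gmap n d 0) ^ d = 0 := by
  ext i j
  have := Gmap_zero_pow (n := n) (d := d) (d - 1) i j
  rw [show d - 1 + 1 = d by omega] at this
  rw [this, if_neg (by omega)]
  rfl

lemma Gmap_zero_pow_pred_ne (hn : 2 ≤ n) (hd1 : 1 ≤ d) (hdn : d ≤ n) :
    (Gmap n d 0) ^ (d - 1) ≠ 0 := by
  rcases Nat.eq_or_lt_of_le hd1 with h1 | h2
  · rw [← h1]
    simp only [Nat.sub_self, pow_zero]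
    intro h
    have := congrFun (congrFun h ⟨0, by omega⟩) ⟨0, by omega⟩
    simp [Matrix.one_apply] at this
  · intro h0
    have := Gmap_zero_pow (n := n) (d := d) (d - 2) ⟨d - 1, by omega⟩ ⟨0, by omega⟩
    rw [show d - 2 + 1 = d - 1 by omega, h0] at this
    rw [if_pos (by simp; omega)] at this
    simp at this

lemma Gmap_zero_minpoly (hn : 2 ≤ n) (hd1 : 1 ≤ d) (hdn : d ≤ n) :
    (minpoly ℂ (Gmap n d 0)).natDegree = d := by
  have hint : IsIntegral ℂ (Gmap n d 0) := IsIntegral.of_finite ℂ _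
  have hdvd : minpoly ℂ (Gmap n d 0) ∣ X ^ d := by
    apply minpoly.dvd
    rw [map_pow, aeval_X]
    exact Gmap_zero_pow_d hd1
  obtain ⟨k, hk, hassoc⟩ := (dvd_prime_pow Polynomial.prime_X d).mp hdvd
  have heq : minpoly ℂ (Gmap n d 0) = X ^ k :=
    Polynomial.eq_of_monic_of_associated (minpoly.monic hint) (monic_X_pow k) hassoc
  rw [heq, natDegree_X_pow]
  by_contra hne
  have hkd : k ≤ d - 1 := by omega
  apply Gmap_zero_pow_pred_ne hn hd1 hdn
  have hk0 : (Gmap n d 0) ^ k = 0 := by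
    have := minpoly.aeval ℂ (Gmap n d 0)
    rwa [heq, map_pow, aeval_X] at this
  calc (Gmap n d 0) ^ (d - 1) = (Gmap n d 0) ^ k * (Gmap n d 0) ^ (d - 1 - k) := by
        rw [← pow_add]; congr 1; omega
    _ = 0 := by rw [hk0, zero_mul]

end Aux

/-- (i) G maps Ω_n to Ω_n; (ii) r(G(X)) = |tr(X)/n|^{1/d}; (iii) G(0) is nilpotent with
minimal polynomial of degree d. -/
theorem Gmap_properties (n d : ℕ) (hn : 2 ≤ n) (hd1 : 1 ≤ d) (hdn : d ≤ n) :
    (∀ X : Matrix (Fin n) (Fin n) ℂ, specRad X < 1 → specRad (Gmap n d X) < 1) ∧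
    (∀ X : Matrix (Fin n) (Fin n) ℂ, specRad X < 1 →
      specRad (Gmap n d X) = ‖X.trace / (n : ℂ)‖ ^ ((1 : ℝ) / d)) ∧
    IsNilpotent (Gmap n d 0) ∧ (minpoly ℂ (Gmap n d 0)).natDegree = d := by
  have hn0 : 0 < n := by omega
  have habs : ∀ X : Matrix (Fin n) (Fin n) ℂ, specRad X < 1 →
      ‖X.trace / (n : ℂ)‖ < 1 :=
    fun X hX => lt_of_le_of_lt (abs_trace_div_le hn0 X) hX
  have hii : ∀ X : Matrix (Fin n) (Fin n) ℂ, specRad X < 1 →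
      specRad (Gmap n d X) = ‖X.trace / (n : ℂ)‖ ^ ((1 : ℝ) / d) := by
    intro X hX
    exact specRad_Gmap_aux hd1 (Gmap n d X) (X.trace / n)
      (fun lam h => Gmap_spectrum_sub X hd1 hdn lam h)
      (fun lam h => Gmap_spectrum_sup X hd1 hdn lam h)
      (le_of_lt (habs X hX))
  refine ⟨?_, hii, ⟨d, Gmap_zero_pow_d hd1⟩, Gmap_zero_minpoly hn hd1 hdn⟩
  intro X hX
  rw [hii X hX]
  exact Real.rpow_lt_one (norm_nonneg _) (habs X hX) (by positivity)
end

section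
/- Let F : 𝔻 → M_n(ℂ) be holomorphic with r(F(ζ)) < 1 for all ζ ∈ 𝔻, and suppose F(0) is nilpotent of order d. Then for every ζ ∈ 𝔻 and every eigenvalue μ of F(ζ), |μ|^d ≤ |ζ|; equivalently r(F(ζ)) ≤ |ζ|^{1/d}. -/
open Complex Metric

namespace SchwarzAux
open Polynomial Pointwise
variable {n : ℕ}

noncomputable def Complex.abs : AbsoluteValue ℂ ℝ :=
  IsAbsoluteValue.toAbsoluteValue (norm : ℂ → ℝ)

lemma Complex.norm_eq_abs (z : ℂ) : ‖z‖ = Complex.abs z := rfl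

lemma eval_charpoly (M : Matrix (Fin n) (Fin n) ℂ) (x : ℂ) :
    M.charpoly.eval x = (x • (1 : Matrix (Fin n) (Fin n) ℂ) - M).det := by
  have hmap := RingHom.map_det (Polynomial.evalRingHom x) (Matrix.charmatrix M)
  rw [Polynomial.coe_evalRingHom] at hmap
  rw [Matrix.charpoly, hmap]
  congr 1
  ext i j
  by_cases h : i = j
  · subst h
    simp [Matrix.charmatrix_apply_eq, Matrix.one_apply, Matrix.sub_apply, Matrix.smul_apply]
  · simp [Matrix.charmatrix_apply_ne _ _ _ h, Matrix.one_apply_ne h, Matrix.sub_apply,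
      Matrix.smul_apply]

lemma mem_spectrum_iff_eval (M : Matrix (Fin n) (Fin n) ℂ) (x : ℂ) :
    x ∈ spectrum ℂ M ↔ M.charpoly.eval x = 0 := by
  rw [spectrum.mem_iff, eval_charpoly, Algebra.algebraMap_eq_smul_one]
  constructor
  · intro h
    by_contra hdet
    exact h ((Matrix.isUnit_iff_isUnit_det _).2 (isUnit_iff_ne_zero.2 hdet))
  · intro h h'
    have := (Matrix.isUnit_iff_isUnit_det _).1 h'
    rw [h] at this
    exact (isUnit_iff_ne_zero.1 this) rfl


lemma multiset_prod_le_pow {r : ℝ} (hr : 0 ≤ r) (t : Multiset ℝ)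
    (h0 : ∀ x ∈ t, 0 ≤ x) (h : ∀ x ∈ t, x ≤ r) :
    t.prod ≤ r ^ Multiset.card t := by
  induction t using Multiset.induction with
  | empty => simp
  | cons a s ih =>
    rw [Multiset.prod_cons, Multiset.card_cons, pow_succ, mul_comm (r ^ Multiset.card s) r]
    have hprod0 : (0:ℝ) ≤ s.prod :=
      Multiset.prod_nonneg (fun x hx => h0 x (Multiset.mem_cons_of_mem hx))
    exact mul_le_mul (h a (Multiset.mem_cons_self a s))
      (ih (fun x hx => h0 x (Multiset.mem_cons_of_mem hx))
          (fun x hx => h x (Multiset.mem_cons_of_mem hx)))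
      hprod0 hr

lemma charpoly_coeff_bound (M : Matrix (Fin n) (Fin n) ℂ) {r : ℝ} (hr : 0 ≤ r)
    (h : ∀ μ ∈ spectrum ℂ M, Complex.abs μ ≤ r) {k : ℕ} (hk : k ≤ n) :
    Complex.abs (M.charpoly.coeff (n - k)) ≤ (n.choose k : ℝ) * r ^ k := by
  have hmonic := M.charpoly_monic
  have hdeg : M.charpoly.natDegree = n := by simpa using M.charpoly_natDegree_eq_dim
  have hsplits : M.charpoly.Splits := IsAlgClosed.splits _
  have hcard : Multiset.card M.charpoly.roots = n := by
    have := Polynomial.splits_iff_card_roots.mp hsplits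
    rw [hdeg] at this; exact this
  have hroots : ∀ x ∈ M.charpoly.roots, Complex.abs x ≤ r := fun x hx =>
    h x ((mem_spectrum_iff_eval M x).2 (Polynomial.isRoot_of_mem_roots hx))
  have hcoeff : M.charpoly.coeff (n - k) = (-1)^k * M.charpoly.roots.esymm k := by
    conv_lhs => rw [hsplits.eq_prod_roots_of_monic hmonic]
    rw [Multiset.prod_X_sub_C_coeff _ (by rw [hcard]; omega), hcard]
    congr 2 <;> omega
  rw [hcoeff, map_mul, map_pow]
  simp only [map_neg, map_one, AbsoluteValue.map_neg, one_pow, one_mul]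
  rw [Multiset.esymm, ← Complex.norm_eq_abs]
  refine le_trans (norm_multiset_sum_le _) ?_
  rw [Multiset.map_map]
  have hb : ∀ x ∈ (M.charpoly.roots.powersetCard k).map
      (fun t : Multiset ℂ => ‖t.prod‖), x ≤ r ^ k := by
    intro x hx
    obtain ⟨t, ht, rfl⟩ := Multiset.mem_map.1 hx
    obtain ⟨htsub, htcard⟩ := Multiset.mem_powersetCard.1 ht
    have h1 : ‖t.prod‖ = (t.map (fun z => Complex.abs z)).prod := by
      rw [← map_multiset_prod (Complex.abs)]; rfl
    have h2 : ∀ y ∈ t.map (fun z => Complex.abs z), y ≤ r := by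
      intro y hy
      obtain ⟨z, hz, rfl⟩ := Multiset.mem_map.1 hy
      exact hroots z (Multiset.mem_of_le htsub hz)
    have h3 := multiset_prod_le_pow hr (t.map (fun z => Complex.abs z))
      (by intro y hy; obtain ⟨z, hz, rfl⟩ := Multiset.mem_map.1 hy; exact Complex.abs.nonneg z) h2
    rw [Multiset.card_map, htcard] at h3
    rw [h1]; exact h3
  refine le_trans (Multiset.sum_le_card_nsmul _ _ hb) ?_
  rw [Multiset.card_map, Multiset.card_powersetCard, hcard]
  simp [nsmul_eq_mul]



variable {n : ℕ} {s : Set ℂ}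

lemma diffOn_mul_entries {A B : ℂ → Matrix (Fin n) (Fin n) ℂ}
    (hA : ∀ i j, DifferentiableOn ℂ (fun ζ => A ζ i j) s)
    (hB : ∀ i j, DifferentiableOn ℂ (fun ζ => B ζ i j) s) :
    ∀ i j, DifferentiableOn ℂ (fun ζ => (A ζ * B ζ) i j) s := by
  intro i j
  simp only [Matrix.mul_apply]
  exact DifferentiableOn.fun_sum (fun k _ => (hA i k).mul (hB k j))

lemma diffOn_pow_entries {A : ℂ → Matrix (Fin n) (Fin n) ℂ}
    (hA : ∀ i j, DifferentiableOn ℂ (fun ζ => A ζ i j) s) (m : ℕ) :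
    ∀ i j, DifferentiableOn ℂ (fun ζ => (A ζ ^ m) i j) s := by
  induction m with
  | zero =>
    intro i j
    simp only [pow_zero]
    exact differentiableOn_const _
  | succ m ih =>
    intro i j
    simp only [pow_succ]
    exact diffOn_mul_entries ih hA i j

lemma diffOn_det {A : ℂ → Matrix (Fin n) (Fin n) ℂ}
    (hA : ∀ i j, DifferentiableOn ℂ (fun ζ => A ζ i j) s) :
    DifferentiableOn ℂ (fun ζ => (A ζ).det) s := by
  simp only [Matrix.det_apply']
  exact DifferentiableOn.fun_sum fun σ _ =>
    DifferentiableOn.const_mul (DifferentiableOn.fun_finsetProd (fun i _ => hA (σ i) i)) _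

lemma diffOn_charpoly_coeff {A : ℂ → Matrix (Fin n) (Fin n) ℂ}
    (hA : ∀ i j, DifferentiableOn ℂ (fun ζ => A ζ i j) s) (k : ℕ) :
    DifferentiableOn ℂ (fun ζ => (A ζ).charpoly.coeff k) s := by
  classical
  have hinj : Set.InjOn (fun j : ℕ => (j : ℂ)) (Finset.range (n + 1)) :=
    fun a _ b _ hab => Nat.cast_injective hab
  have hrepr : ∀ ζ, (A ζ).charpoly.coeff k
      = ∑ j ∈ Finset.range (n + 1), (A ζ).charpoly.eval ((j : ℕ) : ℂ)
          * (Lagrange.basis (Finset.range (n + 1)) (fun j : ℕ => (j : ℂ)) j).coeff k := by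
    intro ζ
    have hdeg : (A ζ).charpoly.degree < (Finset.range (n + 1)).card := by
      rw [Matrix.charpoly_degree_eq_dim, Fintype.card_fin, Finset.card_range]
      exact_mod_cast Nat.lt_succ_self n
    conv_lhs => rw [Lagrange.eq_interpolate hinj hdeg]
    rw [Lagrange.interpolate_apply, Polynomial.finset_sum_coeff]
    exact Finset.sum_congr rfl fun j _ => by rw [Polynomial.coeff_C_mul]
  have : (fun ζ => (A ζ).charpoly.coeff k) = fun ζ =>
      ∑ j ∈ Finset.range (n + 1), ((((j:ℕ):ℂ) • (1 : Matrix (Fin n) (Fin n) ℂ) - A ζ).det)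
        * (Lagrange.basis (Finset.range (n + 1)) (fun j : ℕ => (j : ℂ)) j).coeff k := by
    funext ζ
    rw [hrepr ζ]
    exact Finset.sum_congr rfl fun j _ => by rw [eval_charpoly]
  rw [this]
  refine DifferentiableOn.fun_sum fun j _ => DifferentiableOn.mul_const ?_ _
  refine diffOn_det fun i j' => ?_
  simp only [Matrix.sub_apply, Matrix.smul_apply, Matrix.one_apply, smul_eq_mul]
  exact (differentiableOn_const _).sub (hA i j')



lemma maxmod {g : ℂ → ℂ} {s' : ℝ} (h0 : 0 < s') (h1 : s' < 1)
    (hg : DifferentiableOn ℂ g (Metric.ball (0:ℂ) 1)) {C : ℝ}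
    (hb : ∀ ζ : ℂ, Complex.abs ζ = s' → Complex.abs (g ζ) ≤ C)
    {z : ℂ} (hz : Complex.abs z ≤ s') : Complex.abs (g z) ≤ C := by
  have hsub : closure (Metric.ball (0:ℂ) s') ⊆ Metric.ball (0:ℂ) 1 := by
    rw [closure_ball (0:ℂ) (ne_of_gt h0)]
    exact Metric.closedBall_subset_ball h1
  have hd : DiffContOnCl ℂ g (Metric.ball (0:ℂ) s') :=
    DifferentiableOn.diffContOnCl (hg.mono hsub)
  rw [← Complex.norm_eq_abs]
  refine Complex.norm_le_of_forall_mem_frontier_norm_le Metric.isBounded_ball hd ?_ ?_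
  · intro w hw
    rw [frontier_ball (0:ℂ) (ne_of_gt h0), mem_sphere_zero_iff_norm] at hw
    exact hb w (by rw [← Complex.norm_eq_abs]; exact hw)
  · rw [closure_ball (0:ℂ) (ne_of_gt h0), Metric.mem_closedBall, dist_zero_right]
    exact hz

lemma root_bound {p : Polynomial ℂ} (hm : p.Monic) {τ : ℂ} (hτ : p.eval τ = 0) :
    Complex.abs τ ^ p.natDegree
      ≤ ∑ i ∈ Finset.range p.natDegree, Complex.abs (p.coeff i) * Complex.abs τ ^ i := by
  have he := Polynomial.eval_eq_sum_range (p := p) τ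
  rw [hτ] at he
  rw [Finset.sum_range_succ, hm.coeff_natDegree, one_mul] at he
  have : τ ^ p.natDegree = -∑ i ∈ Finset.range p.natDegree, p.coeff i * τ ^ i := by
    linear_combination -he
  calc Complex.abs τ ^ p.natDegree
      = Complex.abs (∑ i ∈ Finset.range p.natDegree, p.coeff i * τ ^ i) := by
        rw [← map_pow, this, AbsoluteValue.map_neg]
    _ ≤ ∑ i ∈ Finset.range p.natDegree, Complex.abs (p.coeff i * τ ^ i) :=
        Complex.abs.sum_le _ _
    _ = ∑ i ∈ Finset.range p.natDegree, Complex.abs (p.coeff i) * Complex.abs τ ^ i := by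
        simp [map_mul, map_pow]

lemma globevnik (hn : 0 < n) (H : ℂ → Matrix (Fin n) (Fin n) ℂ)
    (hol : ∀ i j, DifferentiableOn ℂ (fun ζ => H ζ i j) (Metric.ball (0:ℂ) 1))
    (h0 : H 0 = 0)
    (hsp : ∀ ζ ∈ Metric.ball (0:ℂ) 1, ∀ μ ∈ spectrum ℂ (H ζ), Complex.abs μ < 1) :
    ∀ ζ ∈ Metric.ball (0:ℂ) 1, ∀ μ ∈ spectrum ℂ (H ζ), Complex.abs μ ≤ Complex.abs ζ := by
  intro ζ0 hζ0 μ hμ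
  by_contra hgt
  push_neg at hgt
  rcases eq_or_ne ζ0 0 with rfl | hζne
  · rw [h0] at hμ
    have h1 := (mem_spectrum_iff_eval _ μ).1 hμ
    rw [eval_charpoly, sub_zero, Matrix.det_smul, Matrix.det_one, mul_one,
      Fintype.card_fin] at h1
    have hμ0 : μ = 0 := (pow_eq_zero_iff hn.ne').1 h1
    rw [hμ0] at hgt
    simp at hgt
  · have habs0 : 0 < Complex.abs ζ0 := Complex.abs.pos hζne
    have hμpos : 0 < Complex.abs μ := lt_trans habs0 hgt
    have hζ0lt : Complex.abs ζ0 < 1 := by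
      rw [Metric.mem_ball, dist_zero_right] at hζ0; exact hζ0
    set B : ℂ → Matrix (Fin n) (Fin n) ℂ :=
      fun ζ => Matrix.of fun i j => dslope (fun z => H z i j) 0 ζ with hBdef
    have hBdiff : ∀ i j, DifferentiableOn ℂ (fun ζ => B ζ i j) (Metric.ball (0:ℂ) 1) := by
      intro i j ζ hζ
      rcases eq_or_ne ζ 0 with rfl | hne
      · obtain ⟨p, hp⟩ := (hol i j).analyticAt (Metric.ball_mem_nhds _ one_pos)
        exact
          (hp.has_fpower_series_dslope_fslope.analyticAt.differentiableAt).differentiableWithinAt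
      · exact (differentiableWithinAt_dslope_of_ne hne).2 (hol i j ζ hζ)
    have hBeq : ∀ ζ : ℂ, ζ ≠ 0 → B ζ = (ζ⁻¹ : ℂ) • H ζ := by
      intro ζ hζ
      ext i j
      simp only [hBdef, Matrix.of_apply, Matrix.smul_apply, smul_eq_mul]
      rw [dslope_of_ne _ hζ, slope_def_field]
      rw [show H 0 i j = 0 from by rw [h0]; rfl]
      rw [sub_zero, sub_zero, div_eq_inv_mul]
    have hspecsmul : ∀ ζ : ℂ, ζ ≠ 0 →
        spectrum ℂ (B ζ) = (ζ⁻¹ : ℂ) • spectrum ℂ (H ζ) := by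
      intro ζ hζ
      rw [hBeq ζ hζ]
      calc spectrum ℂ ((ζ⁻¹:ℂ) • H ζ)
          = spectrum ℂ ((Units.mk0 (ζ⁻¹:ℂ) (inv_ne_zero hζ)) • H ζ) := by
            rw [Units.smul_def, Units.val_mk0]
        _ = (Units.mk0 (ζ⁻¹:ℂ) (inv_ne_zero hζ)) • spectrum ℂ (H ζ) :=
            spectrum.unit_smul_eq_smul _ _
        _ = (ζ⁻¹:ℂ) • spectrum ℂ (H ζ) := by
            rw [Units.smul_def, Units.val_mk0]
    have hspecB : ∀ ζ : ℂ, ζ ∈ Metric.ball (0:ℂ) 1 → ζ ≠ 0 →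
        ∀ ν ∈ spectrum ℂ (B ζ), Complex.abs ν ≤ (Complex.abs ζ)⁻¹ := by
      intro ζ hζb hζ ν hν
      rw [hspecsmul ζ hζ] at hν
      obtain ⟨μ', hμ', rfl⟩ := hν
      simp only [smul_eq_mul, map_mul, map_inv₀]
      have := hsp ζ hζb μ' hμ'
      have hζpos : 0 < Complex.abs ζ := Complex.abs.pos hζ
      calc (Complex.abs ζ)⁻¹ * Complex.abs μ' ≤ (Complex.abs ζ)⁻¹ * 1 := by
            apply mul_le_mul_of_nonneg_left this.le (by positivity)
        _ = (Complex.abs ζ)⁻¹ := mul_one _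
    -- choose radius s'
    set a : ℝ := max (Complex.abs ζ0) (Complex.abs ζ0 / Complex.abs μ) with hadef
    have ha1 : a < 1 := max_lt hζ0lt ((div_lt_one hμpos).2 hgt)
    have ha0 : 0 < a := lt_of_lt_of_le habs0 (le_max_left _ _)
    set s' : ℝ := (a + 1) / 2 with hsdef
    have has : a < s' := by rw [hsdef]; linarith
    have hs0 : 0 < s' := lt_trans ha0 has
    have hs1 : s' < 1 := by rw [hsdef]; linarith
    have hζ0s : Complex.abs ζ0 ≤ s' := le_of_lt (lt_of_le_of_lt (le_max_left _ _) has)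
    set ρ : ℝ := s' * Complex.abs μ / Complex.abs ζ0 with hρdef
    have hρ : 1 < ρ := by
      rw [hρdef, lt_div_iff₀ habs0, one_mul]
      have : Complex.abs ζ0 / Complex.abs μ < s' := lt_of_le_of_lt (le_max_right _ _) has
      calc Complex.abs ζ0 = (Complex.abs ζ0 / Complex.abs μ) * Complex.abs μ := by
            field_simp
        _ < s' * Complex.abs μ := by
            exact mul_lt_mul_of_pos_right this hμpos
    obtain ⟨m, hm⟩ := pow_unbounded_of_one_lt ((n:ℝ) * 2 ^ n + 1) hρ
    have hP1 : (1:ℝ) ≤ ρ ^ m := by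
      calc (1:ℝ) = 1 ^ m := (one_pow m).symm
        _ ≤ ρ ^ m := pow_le_pow_left₀ (by norm_num) hρ.le m
    have hmpos : 0 < m := by
      rcases Nat.eq_zero_or_pos m with rfl | h
      · exfalso
        rw [pow_zero] at hm
        have : (0:ℝ) ≤ (n:ℝ) * 2 ^ n := by positivity
        linarith
      · exact h
    set R : ℝ := (s'⁻¹) ^ m with hRdef
    have hRpos : 0 < R := by positivity
    -- coefficient bounds at ζ0 via maximum modulus
    have hcoef : ∀ i : ℕ, i < n →
        Complex.abs (((B ζ0) ^ m).charpoly.coeff i)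
          ≤ (n.choose (n - i) : ℝ) * R ^ (n - i) := by
      intro i hi
      have hk1 : 1 ≤ n - i := by omega
      have hkn : n - i ≤ n := by omega
      have hmax := maxmod hs0 hs1
        (diffOn_charpoly_coeff (diffOn_pow_entries hBdiff m) (n - (n - i)))
        (C := (n.choose (n - i) : ℝ) * R ^ (n - i)) ?_ hζ0s
      · rwa [show n - (n - i) = i from by omega] at hmax
      · intro ζ hζs
        have hζb : ζ ∈ Metric.ball (0:ℂ) 1 := by
          rw [Metric.mem_ball, dist_zero_right, Complex.norm_eq_abs, hζs]; exact hs1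
        have hζn0 : ζ ≠ 0 := by
          intro hc; rw [hc] at hζs; simp at hζs; exact absurd hζs.symm (ne_of_gt hs0)
        refine charpoly_coeff_bound _ hRpos.le ?_ hkn
        intro ν hν
        rw [spectrum.map_pow_of_pos _ hmpos] at hν
        obtain ⟨ν', hν', rfl⟩ := hν
        rw [map_pow, hRdef]
        apply pow_le_pow_left₀ (Complex.abs.nonneg _) _ m
        calc Complex.abs ν' ≤ (Complex.abs ζ)⁻¹ := hspecB ζ hζb hζn0 ν' hν'
          _ = s'⁻¹ := by rw [hζs]
    -- τ is a root of charpoly of (B ζ0)^m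
    have hτspec : (ζ0⁻¹ * μ) ^ m ∈ spectrum ℂ ((B ζ0) ^ m) := by
      apply spectrum.pow_image_subset (B ζ0) m
      refine ⟨ζ0⁻¹ * μ, ?_, rfl⟩
      rw [hspecsmul ζ0 hζne]
      exact ⟨μ, hμ, rfl⟩
    have hroot : ((B ζ0) ^ m).charpoly.eval ((ζ0⁻¹ * μ) ^ m) = 0 :=
      (mem_spectrum_iff_eval _ _).1 hτspec
    have hndeg : ((B ζ0) ^ m).charpoly.natDegree = n := by
      simpa using ((B ζ0) ^ m).charpoly_natDegree_eq_dim
    have hineq := root_bound (((B ζ0) ^ m).charpoly_monic) hroot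
    rw [hndeg] at hineq
    -- numeric endgame
    set T : ℝ := Complex.abs ((ζ0⁻¹ * μ) ^ m) with hTdef
    have hT : T = ρ ^ m * R := by
      rw [hTdef, map_pow, map_mul, map_inv₀, hRdef, ← mul_pow]
      congr 1
      rw [hρdef]
      field_simp
    have hkey : ∀ i ∈ Finset.range n,
        Complex.abs (((B ζ0) ^ m).charpoly.coeff i) * T ^ i
          ≤ (2:ℝ) ^ n * (ρ ^ m) ^ (n - 1) * R ^ n := by
      intro i hi
      rw [Finset.mem_range] at hi
      have h1 : Complex.abs (((B ζ0) ^ m).charpoly.coeff i) * T ^ i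
          ≤ ((n.choose (n - i) : ℝ) * R ^ (n - i)) * T ^ i :=
        mul_le_mul_of_nonneg_right (hcoef i hi)
          (pow_nonneg (Complex.abs.nonneg _) i)
      have h2 : ((n.choose (n - i) : ℝ) * R ^ (n - i)) * T ^ i
          = (n.choose (n - i) : ℝ) * ((ρ ^ m) ^ i * R ^ n) := by
        rw [hT, mul_pow, mul_assoc]
        congr 1
        rw [← mul_assoc, mul_comm (R ^ (n - i)) ((ρ ^ m) ^ i), mul_assoc, ← pow_add]
        congr 2
        omega
      have hchoose : (n.choose (n - i) : ℝ) ≤ (2:ℝ) ^ n := by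
        have h' : n.choose (n - i) ≤ 2 ^ n := by
          rw [← Nat.sum_range_choose n]
          exact Finset.single_le_sum (fun _ _ => Nat.zero_le _)
            (Finset.mem_range.2 (by omega))
        exact_mod_cast h'
      have hpow : (ρ ^ m) ^ i ≤ (ρ ^ m) ^ (n - 1) :=
        pow_le_pow_right₀ hP1 (by omega)
      calc Complex.abs (((B ζ0) ^ m).charpoly.coeff i) * T ^ i
          ≤ (n.choose (n - i) : ℝ) * ((ρ ^ m) ^ i * R ^ n) := by rw [← h2]; exact h1
        _ ≤ (2:ℝ) ^ n * ((ρ ^ m) ^ (n - 1) * R ^ n) := by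
            refine mul_le_mul hchoose
              (mul_le_mul_of_nonneg_right hpow (by positivity)) (by positivity) (by positivity)
        _ = (2:ℝ) ^ n * (ρ ^ m) ^ (n - 1) * R ^ n := by ring
    have hsum := Finset.sum_le_card_nsmul (Finset.range n) _ _ hkey
    rw [Finset.card_range, nsmul_eq_mul] at hsum
    have hTn : T ^ n = (ρ ^ m) ^ (n - 1) * (ρ ^ m) * R ^ n := by
      rw [hT, mul_pow, ← pow_succ]
      congr 2
      omega
    have hfinal : (ρ ^ m) ^ (n - 1) * (ρ ^ m) * R ^ n
        ≤ ((n:ℝ) * 2 ^ n) * (ρ ^ m) ^ (n - 1) * R ^ n := by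
      rw [← hTn]
      refine le_trans hineq (le_trans hsum (le_of_eq ?_))
      ring
    have hPn1 : (0:ℝ) < (ρ ^ m) ^ (n - 1) := by positivity
    have hRn : (0:ℝ) < R ^ n := by positivity
    have hc1 : (ρ ^ m) ^ (n - 1) * (ρ ^ m) ≤ ((n:ℝ) * 2 ^ n) * (ρ ^ m) ^ (n - 1) :=
      le_of_mul_le_mul_right hfinal hRn
    rw [mul_comm ((n:ℝ) * 2 ^ n) ((ρ ^ m) ^ (n - 1))] at hc1
    have hc2 : ρ ^ m ≤ (n:ℝ) * 2 ^ n := le_of_mul_le_mul_left hc1 hPn1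
    linarith

end SchwarzAux

open SchwarzAux in
/-- Schwarz lemma at a nilpotent base point: if F : 𝔻 → Ω_n is holomorphic and F(0) is
nilpotent of order d, then |μ|^d ≤ |ζ| for every eigenvalue μ of F(ζ); equivalently,
r(F(ζ)) ≤ |ζ|^{1/d}. -/
theorem schwarz_nilpotent_base {n : ℕ} (F : ℂ → Matrix (Fin n) (Fin n) ℂ)
    (hol : ∀ i j, DifferentiableOn ℂ (fun ζ => F ζ i j) (Metric.ball (0 : ℂ) 1))
    (hrange : ∀ ζ ∈ Metric.ball (0 : ℂ) 1, specRad (F ζ) < 1)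
    (d : ℕ) (hd : F 0 ^ d = 0) (hd' : F 0 ^ (d - 1) ≠ 0) :
    ∀ ζ ∈ Metric.ball (0 : ℂ) 1,
      (∀ μ ∈ spectrum ℂ (F ζ), ‖μ‖ ^ d ≤ ‖ζ‖) ∧
      specRad (F ζ) ≤ ‖ζ‖ ^ ((1 : ℝ) / d) := by
  have hn : 0 < n := by
    by_contra h
    push_neg at h
    have hn0 : n = 0 := by omega
    subst hn0
    apply hd'
    ext i j
    exact i.elim0
  have hd1 : 0 < d := by
    rcases Nat.eq_zero_or_pos d with rfl | h
    · rw [pow_zero] at hd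
      rw [Nat.zero_sub, pow_zero] at hd'
      exact absurd hd hd'
    · exact h
  have hspF : ∀ ζ ∈ Metric.ball (0:ℂ) 1, ∀ μ ∈ spectrum ℂ (F ζ), Complex.abs μ < 1 := by
    intro ζ hζ μ hμ
    refine lt_of_le_of_lt ?_ (hrange ζ hζ)
    have hfin : (spectrum ℂ (F ζ)).Finite := by
      apply Set.Finite.subset ((F ζ).charpoly.roots.finite_toSet)
      intro x hx
      show x ∈ (F ζ).charpoly.roots
      rw [Polynomial.mem_roots ((F ζ).charpoly_monic.ne_zero)]
      exact (mem_spectrum_iff_eval _ _).1 hx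
    exact le_csSup ((hfin.image _).bddAbove) (Set.mem_image_of_mem _ hμ)
  have hHol : ∀ i j, DifferentiableOn ℂ (fun ζ => (F ζ ^ d) i j) (Metric.ball (0:ℂ) 1) :=
    diffOn_pow_entries hol d
  have hHsp : ∀ ζ ∈ Metric.ball (0:ℂ) 1, ∀ μ ∈ spectrum ℂ (F ζ ^ d),
      Complex.abs μ < 1 := by
    intro ζ hζ μ hμ
    rw [spectrum.map_pow_of_pos _ hd1] at hμ
    obtain ⟨μ', hμ', rfl⟩ := hμ
    rw [map_pow]
    exact pow_lt_one₀ (Complex.abs.nonneg _) (hspF ζ hζ μ' hμ') hd1.ne'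
  have hglob := globevnik hn (fun ζ => F ζ ^ d) hHol hd hHsp
  intro ζ hζ
  have hpart1 : ∀ μ ∈ spectrum ℂ (F ζ), Complex.abs μ ^ d ≤ Complex.abs ζ := by
    intro μ hμ
    have hmem : μ ^ d ∈ spectrum ℂ (F ζ ^ d) :=
      spectrum.pow_image_subset (F ζ) d ⟨μ, hμ, rfl⟩
    have h2 := hglob ζ hζ (μ ^ d) hmem
    rwa [map_pow] at h2
  refine ⟨hpart1, ?_⟩
  apply Real.sSup_le
  · rintro x ⟨μ, hμ, rfl⟩
    have h1 := hpart1 μ hμ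
    have hz : ((‖ζ‖) ^ ((1:ℝ)/d)) ^ d = ‖ζ‖ := by
      rw [← Real.rpow_natCast ((‖ζ‖) ^ ((1:ℝ)/d)) d,
        ← Real.rpow_mul (norm_nonneg _),
        one_div, inv_mul_cancel₀ (by exact_mod_cast hd1.ne' : (d:ℝ) ≠ 0), Real.rpow_one]
    refine le_of_pow_le_pow_left₀ hd1.ne' (Real.rpow_nonneg (norm_nonneg _) _) ?_
    rw [hz]
    exact h1
  · exact Real.rpow_nonneg (norm_nonneg _) _
end
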